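/- Let Γ ∈ [1727/1728, 1), let h: [0,1] → ℝ be defined by h(s) = s(1 - Γ/(1-s)) for s ∈ [0,1-Γ] and h(s) = 0 for s ∈ [1-Γ,1], and let ψ: [0,1] → ℝ be defined by ψ(s) = Σ_{k≥0} h_c^k(s) for s ∈ [0,1-Γ] (where h_c(z) = z(1-Γ/(1-z))) and ψ(s) = s for s ∈ [1-Γ,1]. Then ψ is continuous on [0,1], Lipschitz continuous, and satisfies ψ(s) - ψ(h(s)) = s for all s ∈ [0,1]. -/
import Mathlib

noncomputable section
/-- The real map h_c. -/
def hcR (Γ : ℝ) (s : ℝ) : ℝ := s * (1 - Γ / (1 - s))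
/-- The piecewise map h: equal to h_c on [0, 1-Γ] and 0 on [1-Γ, 1]. -/
def hpw (Γ : ℝ) (s : ℝ) : ℝ := if s ≤ 1 - Γ then hcR Γ s else 0
/-- The piecewise function ψ: the series Σ h_c^k(s) on [0, 1-Γ] and s on [1-Γ, 1]. -/
def psiR (Γ : ℝ) (s : ℝ) : ℝ := if s ≤ 1 - Γ then ∑' k : ℕ, (hcR Γ)^[k] s else s

section aux

variable {Γ : ℝ}

lemma Gpos (hΓ1 : (1727 / 1728 : ℝ) ≤ Γ) : (0:ℝ) < Γ :=
  lt_of_lt_of_le (by norm_num) hΓ1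

/-- basic bound: on [0, 1-Γ], 0 ≤ h_c s ≤ (1-Γ) * s. -/
lemma hc_bound (hΓ1 : (1727 / 1728 : ℝ) ≤ Γ) {s : ℝ} (hs0 : 0 ≤ s) (hs1 : s ≤ 1 - Γ) :
    0 ≤ hcR Γ s ∧ hcR Γ s ≤ (1 - Γ) * s := by
  have hΓ0 : (0:ℝ) < Γ := Gpos hΓ1
  have h1s : Γ ≤ 1 - s := by linarith
  have h1s0 : (0:ℝ) < 1 - s := lt_of_lt_of_le hΓ0 h1s
  have hA : Γ / (1 - s) ≤ 1 := (div_le_one h1s0).mpr h1s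
  have hB : Γ ≤ Γ / (1 - s) := by
    rw [le_div_iff₀ h1s0]; nlinarith
  constructor
  · exact mul_nonneg hs0 (by linarith)
  · unfold hcR
    rw [mul_comm (1 - Γ) s]
    exact mul_le_mul_of_nonneg_left (by linarith) hs0

lemma iter_bound (hΓ1 : (1727 / 1728 : ℝ) ≤ Γ) (hΓ2 : Γ < 1)
    {s : ℝ} (hs0 : 0 ≤ s) (hs1 : s ≤ 1 - Γ) (k : ℕ) :
    0 ≤ (hcR Γ)^[k] s ∧ (hcR Γ)^[k] s ≤ (1 - Γ) ^ k * s := by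
  induction k with
  | zero =>
    simp only [Function.iterate_zero_apply, pow_zero, one_mul]
    exact ⟨hs0, le_rfl⟩
  | succ n ih =>
    have hΓ0 : (0:ℝ) < Γ := Gpos hΓ1
    have hε1 : 1 - Γ ≤ 1 := by linarith
    have hε0 : (0:ℝ) ≤ 1 - Γ := by linarith
    have hmem1 : (hcR Γ)^[n] s ≤ 1 - Γ := by
      calc (hcR Γ)^[n] s ≤ (1 - Γ) ^ n * s := ih.2
        _ ≤ 1 * (1 - Γ) := mul_le_mul (pow_le_one₀ hε0 hε1) hs1 hs0 zero_le_one
        _ = 1 - Γ := one_mul _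
    have hb := hc_bound hΓ1 ih.1 hmem1
    rw [Function.iterate_succ_apply']
    refine ⟨hb.1, ?_⟩
    calc hcR Γ ((hcR Γ)^[n] s) ≤ (1 - Γ) * (hcR Γ)^[n] s := hb.2
      _ ≤ (1 - Γ) * ((1 - Γ) ^ n * s) := mul_le_mul_of_nonneg_left ih.2 hε0
      _ = (1 - Γ) ^ (n + 1) * s := by ring

lemma summable_iter (hΓ1 : (1727 / 1728 : ℝ) ≤ Γ) (hΓ2 : Γ < 1)
    {s : ℝ} (hs0 : 0 ≤ s) (hs1 : s ≤ 1 - Γ) :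
    Summable (fun k : ℕ => (hcR Γ)^[k] s) := by
  have hΓ0 : (0:ℝ) < Γ := Gpos hΓ1
  have hε0 : (0:ℝ) ≤ 1 - Γ := by linarith
  have hε1 : (1 - Γ : ℝ) < 1 := by linarith
  apply Summable.of_nonneg_of_le (fun k => (iter_bound hΓ1 hΓ2 hs0 hs1 k).1)
    (fun k => (iter_bound hΓ1 hΓ2 hs0 hs1 k).2)
  exact (summable_geometric_of_lt_one hε0 hε1).mul_right s

/-- Lipschitz estimate for one step. -/
lemma hc_lip (hΓ1 : (1727 / 1728 : ℝ) ≤ Γ) (hΓ2 : Γ < 1)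
    {s t : ℝ} (hs0 : 0 ≤ s) (hs1 : s ≤ 1 - Γ) (ht0 : 0 ≤ t) (ht1 : t ≤ 1 - Γ) :
    |hcR Γ s - hcR Γ t| ≤ (1 / Γ - 1) * |s - t| := by
  have hΓ0 : (0:ℝ) < Γ := Gpos hΓ1
  have h1s : Γ ≤ 1 - s := by linarith
  have h1t : Γ ≤ 1 - t := by linarith
  have h1s0 : (0:ℝ) < 1 - s := lt_of_lt_of_le hΓ0 h1s
  have h1t0 : (0:ℝ) < 1 - t := lt_of_lt_of_le hΓ0 h1t
  have hp0 : (0:ℝ) < (1 - s) * (1 - t) := mul_pos h1s0 h1t0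
  have hpl : Γ ^ 2 ≤ (1 - s) * (1 - t) := by nlinarith
  have hpu : (1 - s) * (1 - t) ≤ 1 := by nlinarith
  have hid : hcR Γ s - hcR Γ t = (s - t) * (1 - Γ / ((1 - s) * (1 - t))) := by
    unfold hcR
    field_simp
    ring
  rw [hid, abs_mul, mul_comm]
  apply mul_le_mul_of_nonneg_right _ (abs_nonneg _)
  have hA : Γ ≤ Γ / ((1 - s) * (1 - t)) := by
    rw [le_div_iff₀ hp0]; nlinarith
  have hB : Γ / ((1 - s) * (1 - t)) ≤ 1 / Γ := by
    rw [div_le_div_iff₀ hp0 hΓ0]; nlinarith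
  have hkey : Γ * (1 / Γ) = 1 := by field_simp
  rw [abs_le]
  constructor
  · linarith
  · nlinarith [sq_nonneg (1 - Γ)]

lemma iter_lip (hΓ1 : (1727 / 1728 : ℝ) ≤ Γ) (hΓ2 : Γ < 1)
    {s t : ℝ} (hs0 : 0 ≤ s) (hs1 : s ≤ 1 - Γ) (ht0 : 0 ≤ t) (ht1 : t ≤ 1 - Γ)
    (k : ℕ) : |(hcR Γ)^[k] s - (hcR Γ)^[k] t| ≤ (1 / Γ - 1) ^ k * |s - t| := by
  induction k with
  | zero => simp
  | succ n ih =>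
    have hΓ0 : (0:ℝ) < Γ := Gpos hΓ1
    have hL0 : (0:ℝ) ≤ 1 / Γ - 1 := by
      have h1 : 1 ≤ 1 / Γ := (le_div_iff₀ hΓ0).mpr (by linarith)
      linarith
    have hms := iter_bound hΓ1 hΓ2 hs0 hs1 n
    have hmt := iter_bound hΓ1 hΓ2 ht0 ht1 n
    have hε1 : (1 - Γ : ℝ) ≤ 1 := by linarith
    have hε0 : (0:ℝ) ≤ 1 - Γ := by linarith
    have hms1 : (hcR Γ)^[n] s ≤ 1 - Γ := by
      calc (hcR Γ)^[n] s ≤ (1-Γ)^n * s := hms.2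
        _ ≤ 1 * (1 - Γ) := mul_le_mul (pow_le_one₀ hε0 hε1) hs1 hs0 zero_le_one
        _ = 1 - Γ := one_mul _
    have hmt1 : (hcR Γ)^[n] t ≤ 1 - Γ := by
      calc (hcR Γ)^[n] t ≤ (1-Γ)^n * t := hmt.2
        _ ≤ 1 * (1 - Γ) := mul_le_mul (pow_le_one₀ hε0 hε1) ht1 ht0 zero_le_one
        _ = 1 - Γ := one_mul _
    rw [Function.iterate_succ_apply', Function.iterate_succ_apply']
    calc |hcR Γ ((hcR Γ)^[n] s) - hcR Γ ((hcR Γ)^[n] t)|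
        ≤ (1 / Γ - 1) * |(hcR Γ)^[n] s - (hcR Γ)^[n] t| :=
          hc_lip hΓ1 hΓ2 hms.1 hms1 hmt.1 hmt1
      _ ≤ (1 / Γ - 1) * ((1 / Γ - 1) ^ n * |s - t|) := mul_le_mul_of_nonneg_left ih hL0
      _ = (1 / Γ - 1) ^ (n + 1) * |s - t| := by ring

set_option maxHeartbeats 1000000 in
/-- Lipschitz bound for the series on [0, 1-Γ]. -/
lemma tsum_lip (hΓ1 : (1727 / 1728 : ℝ) ≤ Γ) (hΓ2 : Γ < 1)
    {s t : ℝ} (hs0 : 0 ≤ s) (hs1 : s ≤ 1 - Γ) (ht0 : 0 ≤ t) (ht1 : t ≤ 1 - Γ) :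
    |(∑' k : ℕ, (hcR Γ)^[k] s) - ∑' k : ℕ, (hcR Γ)^[k] t| ≤ 2 * |s - t| := by
  have hΓ0 : (0:ℝ) < Γ := Gpos hΓ1
  have hL0 : (0:ℝ) ≤ 1 / Γ - 1 := by
    have h1 : 1 ≤ 1 / Γ := (le_div_iff₀ hΓ0).mpr (by linarith)
    linarith
  have hLhalf : 1 / Γ - 1 ≤ 1 / 2 := by
    have h : 1 / Γ ≤ 3 / 2 := by
      rw [div_le_iff₀ hΓ0]; nlinarith
    linarith
  have hL1 : 1 / Γ - 1 < 1 := lt_of_le_of_lt hLhalf (by norm_num)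
  have hss := summable_iter hΓ1 hΓ2 hs0 hs1
  have hst := summable_iter hΓ1 hΓ2 ht0 ht1
  have hsub : Summable (fun k : ℕ => (hcR Γ)^[k] s - (hcR Γ)^[k] t) := hss.sub hst
  have habs : Summable (fun k : ℕ => ‖(hcR Γ)^[k] s - (hcR Γ)^[k] t‖) := by
    simpa [Real.norm_eq_abs] using hsub.abs
  rw [← Summable.tsum_sub hss hst]
  calc |∑' k : ℕ, ((hcR Γ)^[k] s - (hcR Γ)^[k] t)|
      ≤ ∑' k : ℕ, |(hcR Γ)^[k] s - (hcR Γ)^[k] t| := by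
        simpa [Real.norm_eq_abs] using norm_tsum_le_tsum_norm habs
    _ ≤ ∑' k : ℕ, (1 / Γ - 1) ^ k * |s - t| := by
        apply Summable.tsum_le_tsum (fun k => iter_lip hΓ1 hΓ2 hs0 hs1 ht0 ht1 k)
          (by simpa [Real.norm_eq_abs] using habs)
          (((summable_geometric_of_lt_one hL0 hL1).mul_right _))
    _ = (1 - (1 / Γ - 1))⁻¹ * |s - t| := by
        rw [tsum_mul_right, tsum_geometric_of_lt_one hL0 hL1]
    _ ≤ 2 * |s - t| := by
        apply mul_le_mul_of_nonneg_right _ (abs_nonneg _)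
        rw [inv_le_iff_one_le_mul₀ (by linarith)]
        nlinarith

lemma psi_zero (hΓ2 : Γ < 1) : psiR Γ 0 = 0 := by
  have h : ∀ k : ℕ, (hcR Γ)^[k] (0:ℝ) = 0 := by
    intro k
    induction k with
    | zero => rfl
    | succ n ih => rw [Function.iterate_succ_apply', ih]; simp [hcR]
  unfold psiR
  rw [if_pos (by linarith), tsum_congr h, tsum_zero]

lemma psi_edge (hΓ1 : (1727 / 1728 : ℝ) ≤ Γ) : psiR Γ (1 - Γ) = 1 - Γ := by
  have hΓ0 : (0:ℝ) < Γ := Gpos hΓ1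
  have hc0 : hcR Γ (1 - Γ) = 0 := by
    unfold hcR
    rw [show (1 : ℝ) - (1 - Γ) = Γ by ring, div_self (ne_of_gt hΓ0)]
    ring
  have h0 : ∀ k : ℕ, (hcR Γ)^[k] (0:ℝ) = 0 := by
    intro k
    induction k with
    | zero => rfl
    | succ n ih => rw [Function.iterate_succ_apply', ih]; simp [hcR]
  have h : ∀ k : ℕ, (hcR Γ)^[k] (1 - Γ) = if k = 0 then 1 - Γ else 0 := by
    intro k
    cases k with
    | zero => rfl
    | succ n => rw [Function.iterate_succ_apply, hc0, h0]; simp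
  unfold psiR
  rw [if_pos le_rfl, tsum_congr h, tsum_ite_eq]

/-- psiR equals id at points ≥ 1-Γ. -/
lemma psi_id (hΓ1 : (1727 / 1728 : ℝ) ≤ Γ) {s : ℝ} (hs : 1 - Γ ≤ s) : psiR Γ s = s := by
  rcases eq_or_lt_of_le hs with h | h
  · rw [← h]; exact psi_edge hΓ1
  · unfold psiR; rw [if_neg (not_le.mpr h)]

lemma psi_lip (hΓ1 : (1727 / 1728 : ℝ) ≤ Γ) (hΓ2 : Γ < 1)
    {s t : ℝ} (hs : s ∈ Set.Icc (0:ℝ) 1) (ht : t ∈ Set.Icc (0:ℝ) 1) :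
    |psiR Γ s - psiR Γ t| ≤ 2 * |s - t| := by
  have hΓ0 : (0:ℝ) < Γ := Gpos hΓ1
  have key : ∀ u v : ℝ, u ∈ Set.Icc (0:ℝ) 1 → v ∈ Set.Icc (0:ℝ) 1 → u ≤ v →
      |psiR Γ u - psiR Γ v| ≤ 2 * |u - v| := by
    intro u v hu hv huv
    rcases le_or_gt v (1 - Γ) with hv1 | hv1
    · have e1 : psiR Γ u = ∑' k : ℕ, (hcR Γ)^[k] u := by
        unfold psiR; rw [if_pos (le_trans huv hv1)]
      have e2 : psiR Γ v = ∑' k : ℕ, (hcR Γ)^[k] v := by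
        unfold psiR; rw [if_pos hv1]
      rw [e1, e2]
      exact tsum_lip hΓ1 hΓ2 hu.1 (le_trans huv hv1) hv.1 hv1
    · rcases le_or_gt u (1 - Γ) with hu1 | hu1
      · have hε0 : (0:ℝ) ≤ 1 - Γ := by linarith
        have e1 : |psiR Γ u - psiR Γ (1 - Γ)| ≤ 2 * |u - (1 - Γ)| := by
          have h1 : psiR Γ u = ∑' k : ℕ, (hcR Γ)^[k] u := by
            unfold psiR; rw [if_pos hu1]
          have h2 : psiR Γ (1 - Γ) = ∑' k : ℕ, (hcR Γ)^[k] (1 - Γ) := by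
            unfold psiR; rw [if_pos le_rfl]
          rw [h1, h2]
          exact tsum_lip hΓ1 hΓ2 hu.1 hu1 hε0 le_rfl
        have e2 : psiR Γ v = v := psi_id hΓ1 (le_of_lt hv1)
        have e3 : psiR Γ (1 - Γ) = 1 - Γ := psi_edge hΓ1
        calc |psiR Γ u - psiR Γ v|
            ≤ |psiR Γ u - psiR Γ (1 - Γ)| + |psiR Γ (1 - Γ) - psiR Γ v| := abs_sub_le _ _ _
          _ ≤ 2 * |u - (1 - Γ)| + |psiR Γ (1 - Γ) - psiR Γ v| := by linarith [e1]
          _ = 2 * ((1 - Γ) - u) + (v - (1 - Γ)) := by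
              rw [e2, e3, abs_of_nonpos (by linarith), abs_of_nonpos (by linarith)]; ring
          _ ≤ 2 * (v - u) := by linarith
          _ = 2 * |u - v| := by rw [abs_of_nonpos (by linarith)]; ring
      · rw [psi_id hΓ1 (le_of_lt hu1), psi_id hΓ1 (le_of_lt hv1)]
        linarith [le_abs_self (u - v), neg_abs_le (u - v), abs_nonneg (u - v)]
  rcases le_total s t with h | h
  · exact key s t hs ht h
  · rw [abs_sub_comm (psiR Γ s), abs_sub_comm s]
    exact key t s ht hs h

end aux

theorem stmt11 (Γ : ℝ) (hΓ : Γ ∈ Set.Ico (1727 / 1728 : ℝ) 1) :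
    ContinuousOn (psiR Γ) (Set.Icc 0 1) ∧
    (∃ K : NNReal, LipschitzOnWith K (psiR Γ) (Set.Icc 0 1)) ∧
    (∀ s ∈ Set.Icc (0 : ℝ) 1, psiR Γ s - psiR Γ (hpw Γ s) = s) := by
  obtain ⟨hΓ1, hΓ2⟩ := hΓ
  have hΓ0 : (0:ℝ) < Γ := Gpos hΓ1
  have hlip : LipschitzOnWith 2 (psiR Γ) (Set.Icc 0 1) := by
    apply LipschitzOnWith.of_dist_le_mul
    intro s hs t ht
    rw [Real.dist_eq, Real.dist_eq]
    have := psi_lip hΓ1 hΓ2 hs ht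
    simpa using this
  refine ⟨hlip.continuousOn, ⟨2, hlip⟩, ?_⟩
  intro s hs
  rcases le_or_gt s (1 - Γ) with hs1 | hs1
  · have hb := hc_bound hΓ1 hs.1 hs1
    have hh1 : hcR Γ s ≤ 1 - Γ := by
      calc hcR Γ s ≤ (1 - Γ) * s := hb.2
        _ ≤ (1 - Γ) * 1 := mul_le_mul_of_nonneg_left hs.2 (by linarith)
        _ = 1 - Γ := mul_one _
    have hps : psiR Γ s = ∑' k : ℕ, (hcR Γ)^[k] s := by
      unfold psiR; rw [if_pos hs1]
    have hpw_eq : hpw Γ s = hcR Γ s := by unfold hpw; rw [if_pos hs1]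
    have hph : psiR Γ (hpw Γ s) = ∑' k : ℕ, (hcR Γ)^[k] (hcR Γ s) := by
      rw [hpw_eq]; unfold psiR; rw [if_pos hh1]
    rw [hps, hph]
    have hsum := summable_iter hΓ1 hΓ2 hs.1 hs1
    have h := Summable.tsum_eq_zero_add hsum
    simp only [Function.iterate_zero_apply, Function.iterate_succ_apply] at h
    rw [h]; ring
  · have hpw_eq : hpw Γ s = 0 := by unfold hpw; rw [if_neg (not_le.mpr hs1)]
    rw [hpw_eq, psi_zero hΓ2, psi_id hΓ1 (le_of_lt hs1)]
    ring
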